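/- arXiv:1404.4416 — 2 statements merged into one kernel-verified Lean document; each statement's English description precedes it below -/
import Mathlib

section
/- Let ω be a binary word of length n ending in a letter different from the last letter of η, where η is a prime binary word of length k, and assume η^ℓ occurs exactly once in ωη^ℓ. Then for every ℓ ≥ 2, 0 ≤ Σ(ωη^{ℓ+2}) − 2Σ(ωη^{ℓ+1}) + Σ(ωη^ℓ) − 2k²ℓ < 2k⁴ + 3k. -/
open Filter

/-- Number of occurrences of `ξ` as a factor of `w` (occurrence at position `i`
means `ξ = w_{i+1}...w_{i+|ξ|}`). -/
def occ (w ξ : List Bool) : ℕ :=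
  ((List.range w.length).filter (fun i => ξ.isPrefixOf (w.drop i))).length

/-- `ℓ`-fold concatenation `η^ℓ` of the word `η`. -/
def wpow (η : List Bool) (ℓ : ℕ) : List Bool := (List.replicate ℓ η).flatten

/-- The Kamae–Xue complexity `Σ(w) = Σ_{ξ ∈ {0,1}^+} |w|_ξ²`.  Since only
factors of `w` contribute nonzero terms, the sum is taken over the (finite) set
of nonempty sublists of `w`, which contains all factors of `w`. -/
def kxSum (w : List Bool) : ℕ :=
  ∑ ξ ∈ w.sublists.toFinset.filter (fun ξ => ξ ≠ []), (occ w ξ) ^ 2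

/-- `Λ(w) = max{|η|²(ℓ+1)³ : η nonempty, ℓ ≥ 1, η^ℓ a factor of w}`. -/
noncomputable def Lam (w : List Bool) : ℕ :=
  sSup {m | ∃ η ℓ, η ≠ ([] : List Bool) ∧ 1 ≤ ℓ ∧ wpow η ℓ <:+: w ∧
    m = η.length ^ 2 * (ℓ + 1) ^ 3}

/-- A nonempty word is prime (primitive) if it is not a proper power. -/
def IsPrimeWord (η : List Bool) : Prop :=
  η ≠ [] ∧ ∀ ζ ℓ, 2 ≤ ℓ → η ≠ wpow ζ ℓ

/-- `|v|_{ξ,m}`: occurrences of `ξ` in `v` ending in the last `m` positions. -/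
def occEnd (v ξ : List Bool) (m : ℕ) : ℕ :=
  ((List.range v.length).filter
    (fun i => ξ.isPrefixOf (v.drop i) && decide (v.length < i + ξ.length + m))).length

/-- The prefix `x_1 x_2 ⋯ x_n` of the infinite sequence `x`. -/
def pref (x : ℕ → Bool) (n : ℕ) : List Bool := (List.range n).map x

namespace KX

/-- longest common prefix length -/
def lcp : List Bool → List Bool → ℕ
  | a :: x, b :: y => if a = b then lcp x y + 1 else 0
  | _, _ => 0

@[simp] lemma lcp_nil_left (y : List Bool) : lcp [] y = 0 := by cases y <;> rfl
@[simp] lemma lcp_nil_right (x : List Bool) : lcp x [] = 0 := by cases x <;> rfl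

lemma lcp_comm (x y : List Bool) : lcp x y = lcp y x := by
  induction x generalizing y with
  | nil => simp
  | cons a x ih =>
    cases y with
    | nil => simp
    | cons b y =>
      simp only [lcp]
      by_cases h : a = b
      · subst h; simp [ih]
      · rw [if_neg h, if_neg (fun hh => h hh.symm)]

@[simp] lemma lcp_self (x : List Bool) : lcp x x = x.length := by
  induction x with
  | nil => simp
  | cons a x ih => simp [lcp, ih]

lemma lcp_le_left (x y : List Bool) : lcp x y ≤ x.length := by
  induction x generalizing y with
  | nil => simp
  | cons a x ih =>
    cases y with
    | nil => simp
    | cons b y =>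
      simp only [lcp]
      split
      · simpa using ih y
      · simp

lemma lcp_le_right (x y : List Bool) : lcp x y ≤ y.length := by
  rw [lcp_comm]; exact lcp_le_left y x

lemma take_lcp_eq (x y : List Bool) : x.take (lcp x y) = y.take (lcp x y) := by
  induction x generalizing y with
  | nil => simp
  | cons a x ih =>
    cases y with
    | nil => simp
    | cons b y =>
      simp only [lcp]
      split
      · next h => simp [h, ih y]
      · simp

lemma take_eq_take_of_le_lcp {x y : List Bool} {t : ℕ} (h : t ≤ lcp x y) :
    x.take t = y.take t := by
  have := take_lcp_eq x y
  have h1 : x.take t = (x.take (lcp x y)).take t := by rw [List.take_take, min_eq_left h]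
  have h2 : y.take t = (y.take (lcp x y)).take t := by rw [List.take_take, min_eq_left h]
  rw [h1, h2, this]

lemma prefix_length_le_lcp {ξ x y : List Bool} (hx : ξ <+: x) (hy : ξ <+: y) :
    ξ.length ≤ lcp x y := by
  induction ξ generalizing x y with
  | nil => simp
  | cons a ξ ih =>
    obtain ⟨u, rfl⟩ := hx
    obtain ⟨v, hv⟩ := hy
    cases y with
    | nil => simp at hv
    | cons b y =>
      simp only [List.cons_append, List.cons.injEq] at hv
      obtain ⟨rfl, hv⟩ := hv
      simp only [List.cons_append, lcp, if_pos rfl, List.length_cons, List.append_eq, if_true]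
      have := ih (x := ξ ++ u) (y := y) ⟨u, rfl⟩ ⟨v, hv⟩
      omega

lemma lcp_eq_length_of_prefix {x y : List Bool} (h : y <+: x) : lcp x y = y.length := by
  have h1 := lcp_le_right x y
  have h2 := prefix_length_le_lcp h (List.prefix_refl y)
  omega

lemma prefix_of_lcp_eq_length {x y : List Bool} (h : lcp x y = y.length) : y <+: x := by
  have h2 : x.take y.length = y := by
    conv_lhs => rw [← h]
    rw [take_lcp_eq x y, h, List.take_length]
  have h3 := List.take_append_drop y.length x
  rw [h2] at h3
  exact ⟨_, h3⟩

lemma lcp_append_right_of_le {x y : List Bool} (u : List Bool) (h : y.length ≤ x.length) :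
    lcp (x ++ u) y = lcp x y := by
  induction x generalizing y with
  | nil =>
    have : y = [] := List.length_eq_zero_iff.mp (by simpa using h)
    simp [this]
  | cons a x ih =>
    cases y with
    | nil => simp
    | cons b y =>
      simp only [List.cons_append, lcp, List.append_eq]
      split
      · simp only [List.length_cons] at h
        rw [ih (by omega)]
      · rfl

lemma lcp_append_append {x y : List Bool} (u v : List Bool)
    (hx : lcp x y < x.length) (hy : lcp x y < y.length) :
    lcp (x ++ u) (y ++ v) = lcp x y := by
  induction x generalizing y with
  | nil => simp at hx
  | cons a x ih =>
    cases y with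
    | nil => simp at hy
    | cons b y =>
      simp only [List.cons_append, lcp, List.append_eq]
      split
      · next h =>
        simp only [lcp, if_pos h, List.length_cons] at hx hy
        rw [ih (by omega) (by omega)]
      · rfl

lemma lcp_take_take (p q : ℕ) (x y : List Bool) :
    lcp (x.take p) (y.take q) = min (lcp x y) (min p q) := by
  induction x generalizing y p q with
  | nil => simp
  | cons a x ih =>
    cases y with
    | nil => simp
    | cons b y =>
      cases p with
      | zero => simp
      | succ p =>
        cases q with
        | zero => simp
        | succ q =>
          simp only [List.take_succ_cons, lcp]
          split
          · rw [ih]; omega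
          · simp


open Finset in
lemma occ_eq_sum (u ξ : List Bool) :
    _root_.occ u ξ = ∑ i ∈ Finset.range u.length, if ξ <+: u.drop i then 1 else 0 := by
  rw [_root_.occ, ← List.countP_eq_length_filter]
  generalize u.length = n
  induction n with
  | zero => simp
  | succ n ih =>
    rw [List.range_succ, List.countP_append, Finset.sum_range_succ, ih]
    simp [List.countP, List.countP.go, List.isPrefixOf_iff_prefix]

open Finset in
lemma card_common_prefixes (u x y : List Bool) (hx : x <:+ u) (hy : y <:+ u) :
    ((u.sublists.toFinset.filter (fun ξ => ξ ≠ [])).filter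
      (fun ξ => ξ <+: x ∧ ξ <+: y)).card = lcp x y := by
  rw [show lcp x y = (Finset.Ico 1 (lcp x y + 1)).card by rw [Nat.card_Ico]; omega]
  apply Finset.card_bij (fun ξ _ => ξ.length)
  · intro ξ hξ
    simp only [Finset.mem_filter, List.mem_toFinset, List.mem_sublists] at hξ
    obtain ⟨⟨-, hne⟩, hpx, hpy⟩ := hξ
    have h1 : 1 ≤ ξ.length := by
      cases ξ with | nil => exact absurd rfl hne | cons a l => simp
    have h2 := prefix_length_le_lcp hpx hpy
    rw [Finset.mem_Ico]; omega
  · intro ξ₁ h₁ ξ₂ h₂ hlen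
    simp only [Finset.mem_filter] at h₁ h₂
    rw [List.prefix_iff_eq_take.mp h₁.2.1, List.prefix_iff_eq_take.mp h₂.2.1, hlen]
  · intro t ht
    rw [Finset.mem_Ico] at ht
    have hle : t ≤ lcp x y := by omega
    have htx : t ≤ x.length := le_trans hle (lcp_le_left x y)
    refine ⟨x.take t, ?_, ?_⟩
    · simp only [Finset.mem_filter, List.mem_toFinset, List.mem_sublists]
      refine ⟨⟨((List.take_prefix t x).isInfix.trans hx.isInfix).sublist, ?_⟩,
        List.take_prefix t x, ?_⟩
      · have hlen : (x.take t).length = t := by rw [List.length_take]; omega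
        intro hh
        rw [hh] at hlen
        simp at hlen
        omega
      · rw [take_eq_take_of_le_lcp hle]
        exact List.take_prefix t y
    · simp [List.length_take]; omega

open Finset in
lemma kxSum_eq_sum_lcp (u : List Bool) :
    kxSum u = ∑ i ∈ Finset.range u.length, ∑ j ∈ Finset.range u.length,
      lcp (u.drop i) (u.drop j) := by
  rw [kxSum]
  have : ∀ ξ ∈ u.sublists.toFinset.filter (fun ξ => ξ ≠ []),
      _root_.occ u ξ ^ 2 = ∑ i ∈ Finset.range u.length, ∑ j ∈ Finset.range u.length,
        (if ξ <+: u.drop i ∧ ξ <+: u.drop j then 1 else 0) := by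
    intro ξ _
    rw [sq, occ_eq_sum, Finset.sum_mul_sum]
    refine Finset.sum_congr rfl fun i _ => Finset.sum_congr rfl fun j _ => ?_
    by_cases h1 : ξ <+: u.drop i <;> by_cases h2 : ξ <+: u.drop j <;>
      simp [h1, h2]
  rw [Finset.sum_congr rfl this, Finset.sum_comm]
  refine Finset.sum_congr rfl fun i hi => ?_
  rw [Finset.sum_comm]
  refine Finset.sum_congr rfl fun j hj => ?_
  rw [Finset.sum_boole, ← card_common_prefixes u _ _ (List.drop_suffix i u) (List.drop_suffix j u)]
  norm_cast

end KX

section WpowBasics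

@[simp] lemma wpow_zero (η : List Bool) : wpow η 0 = [] := rfl

@[simp] lemma wpow_one (η : List Bool) : wpow η 1 = η := by simp [wpow]

lemma wpow_succ (η : List Bool) (m : ℕ) : wpow η (m + 1) = η ++ wpow η m := by
  simp [wpow, List.replicate_succ]

lemma wpow_succ' (η : List Bool) (m : ℕ) : wpow η (m + 1) = wpow η m ++ η := by
  simp [wpow, List.replicate_succ']

lemma wpow_add (η : List Bool) (a b : ℕ) : wpow η (a + b) = wpow η a ++ wpow η b := by
  induction a with
  | zero => simp
  | succ a ih =>
    rw [show a + 1 + b = (a + b) + 1 by omega, wpow_succ, ih, wpow_succ, List.append_assoc]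

@[simp] lemma length_wpow (η : List Bool) (m : ℕ) : (wpow η m).length = m * η.length := by
  induction m with
  | zero => simp
  | succ m ih => rw [wpow_succ, List.length_append, ih]; ring

lemma wpow_prefix (η : List Bool) {a b : ℕ} (h : a ≤ b) : wpow η a <+: wpow η b := by
  obtain ⟨c, rfl⟩ := Nat.exists_eq_add_of_le h
  rw [wpow_add]
  exact ⟨_, rfl⟩

lemma getElem_wpow (ζ : List Bool) (m j : ℕ) (h : j < (wpow ζ m).length)
    (hζ : ζ ≠ []) : (wpow ζ m)[j] = ζ[j % ζ.length]'(Nat.mod_lt _ (List.length_pos_iff.mpr hζ)) := by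
  induction m generalizing j with
  | zero => simp at h
  | succ m ih =>
    rw [List.getElem_of_eq (wpow_succ ζ m)]
    have h' : j < (ζ ++ wpow ζ m).length := by rw [← wpow_succ]; exact h
    rcases lt_or_ge j ζ.length with hj | hj
    · rw [List.getElem_append_left hj]
      simp [Nat.mod_eq_of_lt hj]
    · have hb : j - ζ.length < (wpow ζ m).length := by
        simp only [List.length_append, length_wpow] at h'
        simp only [length_wpow]
        omega
      rw [List.getElem_append_right hj, ih (j - ζ.length) hb]
      congr 1
      conv_rhs => rw [Nat.mod_eq_sub_mod hj]

end WpowBasics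

namespace KX

section Rotation

variable {η : List Bool} {k : ℕ}

lemma rotate_ne_self (hη : IsPrimeWord η) (hk : η.length = k)
    {d : ℕ} (hd0 : 0 < d) (hdk : d < k) : η.rotate d ≠ η := by
  intro hrot
  have hk0 : 0 < k := by omega
  set g := Nat.gcd d k with hg
  have hgd : g ∣ d := Nat.gcd_dvd_left d k
  have hgk : g ∣ k := Nat.gcd_dvd_right d k
  have hg0 : 0 < g := Nat.gcd_pos_of_pos_left _ hd0
  have hgltk : g < k := lt_of_le_of_lt (Nat.le_of_dvd hd0 hgd) hdk
  -- all multiples of d rotate to self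
  have hmul : ∀ m, η.rotate (m * d) = η := by
    intro m
    induction m with
    | zero => simp
    | succ m ih =>
      have : (m + 1) * d = m * d + d := by ring
      rw [this, ← List.rotate_rotate, ih, hrot]
  -- some multiple of d is ≡ g mod k
  obtain ⟨d', hd'⟩ := hgd
  obtain ⟨k', hk'⟩ := hgk
  have hk'1 : 1 < k' := by
    by_contra hcon
    push_neg at hcon
    interval_cases k' <;> omega
  have hcop : Nat.Coprime d' k' := by
    have h2 := Nat.coprime_div_gcd_div_gcd (m := d) (n := k) hg0
    rw [← hg] at h2
    rwa [hd', hk', Nat.mul_div_cancel_left _ hg0, Nat.mul_div_cancel_left _ hg0] at h2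
  obtain ⟨m, -, hm⟩ := Nat.exists_mul_mod_eq_one_of_coprime hcop hk'1
  -- hm : d' * m % k' = 1
  have hrotg : η.rotate g = η := by
    have h1 : (m * d) % k = g := by
      rw [hd', hk', show m * (g * d') = g * (d' * m) by ring, Nat.mul_mod_mul_left, hm, mul_one]
    have h2 : η.rotate ((m * d) % k) = η.rotate (m * d) := by
      rw [← hk]; exact List.rotate_mod η (m * d)
    rw [← h1, h2, hmul]
  have hdiv : k / g = k' := by rw [hk', Nat.mul_div_cancel_left _ hg0]
  -- now η is a power of its take g
  have hper : ∀ i, i < η.length → η[i]? = η[(i + g) % η.length]? := by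
    intro i hik
    have h5 : i < (η.rotate g).length := by rw [List.length_rotate]; omega
    have h3 := List.getElem_rotate η g i h5
    have hb : (i + g) % η.length < η.length := Nat.mod_lt _ (by omega)
    conv_lhs => rw [← hrotg]
    rw [List.getElem?_eq_getElem h5, h3, List.getElem?_eq_getElem hb]
  have hmod : ∀ j, j < η.length → η[j]? = η[j % g]? := by
    intro j
    induction j using Nat.strong_induction_on with
    | _ j ih =>
      intro hj
      rcases Nat.lt_or_ge j g with h | h
      · rw [Nat.mod_eq_of_lt h]
      · have h3 := hper (j - g) (by omega)
        rw [show j - g + g = j by omega, Nat.mod_eq_of_lt (by omega : j < η.length)] at h3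
        rw [← h3, ih (j - g) (by omega) (by omega)]
        congr 1
        conv_rhs => rw [Nat.mod_eq_sub_mod h]
  have hηg : η = wpow (η.take g) (k / g) := by
    have hηne : η ≠ [] := hη.1
    have htg : (η.take g).length = g := by rw [List.length_take, hk]; omega
    have htgne : η.take g ≠ [] := by
      intro hh; rw [hh] at htg; simp at htg; omega
    have hlen : (wpow (η.take g) (k / g)).length = η.length := by
      rw [length_wpow, htg, hk, hdiv, hk']; ring
    apply List.ext_getElem?
    intro i
    rcases Nat.lt_or_ge i η.length with hik | hik
    · have hb1 : i % g < g := Nat.mod_lt _ hg0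
      have hb2 : i % g < η.length := by omega
      have hb3 : i < (wpow (η.take g) (k / g)).length := by omega
      rw [hmod i hik, List.getElem?_eq_getElem hb2, List.getElem?_eq_getElem hb3,
        getElem_wpow _ _ _ hb3 htgne]
      have hidx : i % (η.take g).length = i % g := by rw [htg]
      simp only [hidx]
      congr 1
      rw [List.getElem_take]
    · rw [List.getElem?_eq_none (by omega), List.getElem?_eq_none (by omega)]
  have hdvd2 : 2 ≤ k / g := by omega
  exact hη.2 (η.take g) (k / g) hdvd2 hηg

/-- the window of length `k` at phase `r` -/
def win (η : List Bool) (r : ℕ) : List Bool := (((η ++ η).drop r).take η.length)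

lemma win_eq_rotate (hk : η.length = k) {r : ℕ} (hr : r ≤ k) : win η r = η.rotate r := by
  rw [win, List.drop_append_of_le_length (by omega), List.rotate_eq_drop_append_take (by omega)]
  have h1 : (η.drop r).length = k - r := by simp [hk]
  rw [show η.length = (η.drop r).length + r by simp [hk]; omega, List.take_length_add_append]

lemma win_ne (hη : IsPrimeWord η) (hk : η.length = k) {r s : ℕ}
    (hr : r < k) (hs : s < k) (hrs : r ≠ s) : win η r ≠ win η s := by
  wlog h : r < s generalizing r s
  · exact fun hh => this hs hr (Ne.symm hrs) (by omega) hh.symm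
  intro heq
  rw [win_eq_rotate hk (by omega), win_eq_rotate hk (by omega)] at heq
  have e1 : (η.rotate r).rotate (k - r) = η := by
    rw [List.rotate_rotate, show r + (k - r) = k by omega, ← hk, List.rotate_length]
  have e2 : (η.rotate s).rotate (k - r) = η.rotate (s - r) := by
    rw [List.rotate_rotate, show s + (k - r) = (s - r) + k by omega, ← List.rotate_rotate]
    have e3 : (η.rotate (s - r)).length = k := by rw [List.length_rotate, hk]
    rw [← e3, List.rotate_length]
  have h1 : η.rotate (s - r) = η := by rw [← e2, ← heq, e1]
  exact rotate_ne_self hη hk (by omega) (by omega) h1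

@[simp] lemma length_win (η : List Bool) {r : ℕ} (hr : r ≤ η.length) :
    (win η r).length = η.length := by
  simp [win]
  omega

end Rotation

end KX

namespace KX

section Values

variable {η : List Bool} {k : ℕ}

lemma take_win (hk : η.length = k) (hk0 : 0 < k) :
    ∀ L a m, m ≤ k → a + m ≤ k * L →
      ((wpow η L).drop a).take m = ((η ++ η).drop (a % k)).take m := by
  intro L
  induction L with
  | zero =>
    intro a m hm h
    have : m = 0 := by omega
    simp [this]
  | succ L ih =>
    intro a m hm h
    rcases Nat.lt_or_ge a k with ha | ha
    · rw [Nat.mod_eq_of_lt ha, wpow_succ,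
        List.drop_append_of_le_length (by omega : a ≤ η.length),
        List.drop_append_of_le_length (by omega : a ≤ η.length)]
      have hda : (η.drop a).length = k - a := by rw [List.length_drop, hk]
      rcases le_or_gt m (k - a) with hma | hma
      · rw [List.take_append_of_le_length (by omega), List.take_append_of_le_length (by omega)]
      · rw [List.take_append, List.take_append]
        congr 1
        have hL : 1 ≤ L := by
          by_contra hc
          push_neg at hc
          interval_cases L <;> omega
        obtain ⟨L', rfl⟩ := Nat.exists_eq_add_of_le hL
        rw [show 1 + L' = L' + 1 by omega, wpow_succ]
        rw [List.take_append_of_le_length (by rw [hk]; omega)]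
    · obtain ⟨b, rfl⟩ := Nat.exists_eq_add_of_le ha
      have hexp : k * (L + 1) = k * L + k := by ring
      rw [Nat.add_mod_left, wpow_succ, show k + b = η.length + b by rw [hk], List.drop_length_add_append]
      exact ih b m hm (by omega)

/-- phase-pair lcp values -/
def Phi (η : List Bool) (r s : ℕ) : ℕ := lcp (win η r) (win η s)

lemma Phi_comm (η : List Bool) (r s : ℕ) : Phi η r s = Phi η s r := lcp_comm _ _

lemma Phi_lt (hη : IsPrimeWord η) (hk : η.length = k) {r s : ℕ}
    (hr : r < k) (hs : s < k) (hrs : r ≠ s) : Phi η r s < k := by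
  have hlr : (win η r).length = k := by rw [length_win η (by omega), hk]
  have hls : (win η s).length = k := by rw [length_win η (by omega), hk]
  have h1 : Phi η r s ≤ k := by rw [Phi, ← hls]; exact lcp_le_right _ _
  rcases lt_or_eq_of_le h1 with h | h
  · exact h
  · exfalso
    have h2 : win η s <+: win η r := prefix_of_lcp_eq_length (by rw [← hls] at h; exact h)
    have h3 : win η s = win η r := List.IsPrefix.eq_of_length h2 (by omega)
    exact win_ne hη hk hr hs hrs h3.symm

lemma lcp_drop_drop (hη : IsPrimeWord η) (hk : η.length = k) {L M a b : ℕ}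
    (hL : a + k ≤ k * L) (hM : b + k ≤ k * M) (hab : a % k ≠ b % k) :
    lcp ((wpow η L).drop a) ((wpow η M).drop b) = Phi η (a % k) (b % k) := by
  have hk0 : 0 < k := by
    rcases Nat.eq_zero_or_pos k with h | h
    · exfalso; have := hη.1; rw [← hk] at h; simp at h; exact this h
    · exact h
  set x := (wpow η L).drop a
  set y := (wpow η M).drop b
  have hx : x.take k = win η (a % k) := by
    rw [win, hk]
    exact take_win hk hk0 L a k le_rfl hL
  have hy : y.take k = win η (b % k) := by
    rw [win, hk]
    exact take_win hk hk0 M b k le_rfl hM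
  have hφ : Phi η (a % k) (b % k) < k :=
    Phi_lt hη hk (Nat.mod_lt _ hk0) (Nat.mod_lt _ hk0) hab
  have h9 := lcp_take_take k k x y
  rw [hx, hy] at h9
  rw [min_self] at h9
  have hφ' : lcp (win η (a % k)) (win η (b % k)) < k := hφ
  show lcp x y = lcp (win η (a % k)) (win η (b % k))
  omega

end Values

section Occur

variable {ω η : List Bool} {k ℓ : ℕ}

/-- abbreviation for the word -/
def w (ω η : List Bool) (L : ℕ) : List Bool := ω ++ wpow η L

lemma length_w (L : ℕ) : (w ω η L).length = ω.length + L * η.length := by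
  simp [w]

lemma drop_w_high {L j : ℕ} (hj : ω.length ≤ j) :
    (w ω η L).drop j = (wpow η L).drop (j - ω.length) := by
  rw [w, show j = ω.length + (j - ω.length) by omega, List.drop_length_add_append]
  congr 1
  omega

lemma w_succ (L : ℕ) : w ω η (L + 1) = w ω η L ++ η := by
  rw [w, w, wpow_succ', List.append_assoc]

lemma drop_w_low {L i : ℕ} (hi : i ≤ ω.length + L * η.length) :
    (w ω η (L + 1)).drop i = (w ω η L).drop i ++ η := by
  rw [w_succ, List.drop_append_of_le_length (by rw [length_w]; omega)]

lemma drop_wpow_shift (η : List Bool) (M a : ℕ) :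
    (wpow η (M + 1)).drop (η.length + a) = (wpow η M).drop a := by
  rw [wpow_succ, List.drop_length_add_append]

lemma drop_w_shift {L j : ℕ} (hj : ω.length ≤ j) :
    (w ω η (L + 1)).drop (j + η.length) = (w ω η L).drop j := by
  rw [drop_w_high (by omega), drop_w_high hj,
    show j + η.length - ω.length = η.length + (j - ω.length) by omega, drop_wpow_shift]

variable (hη : IsPrimeWord η) (hk : η.length = k) (hk0 : 0 < k) (hl2 : 2 ≤ ℓ)
  (hocc : occ (w ω η ℓ) (wpow η ℓ) = 1)

include hk hk0 hl2 hocc in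
lemma occ_unique {p : ℕ} (hp : p < ω.length + ℓ * η.length)
    (hpre : wpow η ℓ <+: (w ω η ℓ).drop p) (hpn : p ≠ ω.length) : False := by
  set n := ω.length with hn
  have hwlen : (w ω η ℓ).length = n + ℓ * η.length := length_w ℓ
  have hnocc : wpow η ℓ <+: (w ω η ℓ).drop n := by
    rw [w, hn, List.drop_left]
  have hnlt : n < n + ℓ * η.length := by
    have : 0 < ℓ * η.length := Nat.mul_pos (by omega) (by omega)
    omega
  have h2 : (2 : ℕ) ≤ occ (w ω η ℓ) (wpow η ℓ) := by
    rw [occ_eq_sum, hwlen]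
    have hsub : ({p, n} : Finset ℕ) ⊆ Finset.range (n + ℓ * η.length) := by
      intro x hx
      simp only [Finset.mem_insert, Finset.mem_singleton] at hx
      rcases hx with rfl | rfl <;> simp [Finset.mem_range] <;> omega
    calc (2 : ℕ) = ∑ i ∈ ({p, n} : Finset ℕ),
          (if wpow η ℓ <+: (w ω η ℓ).drop i then 1 else 0) := by
          rw [Finset.sum_pair hpn, if_pos hpre, if_pos hnocc]
      _ ≤ _ := Finset.sum_le_sum_of_subset_of_nonneg hsub (by intros; positivity)
  omega

include hk hk0 hl2 hocc in
lemma X1 {L p : ℕ} (hL : ℓ ≤ L) (hp : p < ω.length) :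
    ¬ (wpow η ℓ <+: (w ω η L).drop p) := by
  intro hpre
  set n := ω.length with hn
  have hw : w ω η L = w ω η ℓ ++ wpow η (L - ℓ) := by
    have he : ℓ + (L - ℓ) = L := by omega
    rw [w, w, List.append_assoc, ← wpow_add, he]
  have hdrop : (w ω η L).drop p = (w ω η ℓ).drop p ++ wpow η (L - ℓ) := by
    rw [hw, List.drop_append_of_le_length (by rw [length_w]; omega)]
  rw [hdrop] at hpre
  have hlen : (wpow η ℓ).length ≤ ((w ω η ℓ).drop p).length := by
    rw [length_wpow, List.length_drop, length_w]
    omega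
  have hpre2 : wpow η ℓ <+: (w ω η ℓ).drop p := by
    rw [List.prefix_iff_eq_take] at hpre
    rw [List.take_append_of_le_length hlen] at hpre
    exact List.prefix_iff_eq_take.mpr hpre
  have hlk : 0 < ℓ * η.length := Nat.mul_pos (by omega) (by omega)
  exact occ_unique hk hk0 hl2 hocc (by omega) hpre2 (by omega)

include hη hk hk0 hl2 in
lemma X2 {L q : ℕ} (hL : 2 ≤ L) (hq0 : 0 < q) (hqk : q < k) :
    ¬ (wpow η ℓ <+: (wpow η L).drop q) := by
  intro hpre
  -- η is a prefix of wpow η ℓ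
  have hη_pre : η <+: wpow η ℓ := by
    have h := wpow_add η 1 (ℓ - 1)
    rw [show 1 + (ℓ - 1) = ℓ by omega, wpow_one] at h
    rw [h]
    exact ⟨_, rfl⟩
  have h1 : η <+: (wpow η L).drop q := hη_pre.trans hpre
  have hwin : ((wpow η L).drop q).take k = win η q := by
    have h2k : k * 2 ≤ k * L := Nat.mul_le_mul_left k hL
    have h0 := take_win hk hk0 L q k le_rfl (by omega)
    rw [Nat.mod_eq_of_lt hqk] at h0
    rw [win, hk]
    exact h0
  have h2 : η = win η q := by
    rw [← hwin, ← hk]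
    exact List.prefix_iff_eq_take.mp h1
  have h3 : win η 0 = η := by
    rw [win, List.drop_zero]
    exact List.take_left
  exact win_ne hη hk hk0 hqk (by omega) (by rw [h3, ← h2])

include hη hk hk0 hl2 hocc in
lemma NP {L a i : ℕ} (hL : ℓ + 1 ≤ L) (ha : a < k) (hi : i < ω.length)
    (hlast : ω.getLast? ≠ η.getLast?) :
    ¬ ((wpow η L).drop a <+: (w ω η L).drop i) := by
  intro hpre
  set n := ω.length with hn
  rcases Nat.eq_zero_or_pos a with rfl | ha0
  · rw [List.drop_zero] at hpre
    exact X1 hk hk0 hl2 hocc (by omega) hi ((wpow_prefix η (by omega : ℓ ≤ L)).trans hpre)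
  · -- a > 0
    have hLsplit : wpow η L = η ++ wpow η (L - 1) := by
      have h := wpow_add η 1 (L - 1)
      rw [show 1 + (L - 1) = L by omega, wpow_one] at h
      exact h
    have hdropa : (wpow η L).drop a = η.drop a ++ wpow η (L - 1) := by
      rw [hLsplit, List.drop_append_of_le_length (by omega)]
    have hlen_da : (η.drop a).length = k - a := by rw [List.length_drop, hk]
    have htail : wpow η (L - 1) = ((wpow η L).drop a).drop (k - a) := by
      rw [hdropa, ← hlen_da, List.drop_left]
    have hpre2 : wpow η (L - 1) <+: (w ω η L).drop (i + (k - a)) := by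
      rw [htail, List.drop_drop]
      have h5 := hpre.drop (k - a)
      rwa [List.drop_drop, List.drop_drop] at h5
    have hpre3 : wpow η ℓ <+: (w ω η L).drop (i + (k - a)) :=
      (wpow_prefix η (by omega : ℓ ≤ L - 1)).trans hpre2
    set p := i + (k - a) with hpdef
    rcases Nat.lt_or_ge p n with hpn | hpn
    · exact X1 hk hk0 hl2 hocc (by omega) hpn hpre3
    · have hq : (w ω η L).drop p = (wpow η L).drop (p - n) := drop_w_high hpn
      rcases Nat.eq_or_lt_of_le hpn with hpeq | hplt
      · -- p = n : use last letters
        have hia : n - 1 - i = k - a - 1 := by omega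
        have hblen : k - a - 1 < ((wpow η L).drop a).length := by
          rw [List.length_drop, length_wpow, ← hk]
          have : 2 * η.length ≤ L * η.length := by
            apply Nat.mul_le_mul_right
            omega
          omega
        have hget := hpre.getElem hblen
        -- LHS : ((wpow η L).drop a)[k-a-1] = η[k-1]
        have hL1 : ((wpow η L).drop a)[k - a - 1]'hblen = η[k - 1]'(by omega) := by
          rw [List.getElem_of_eq hdropa, List.getElem_append_left (by omega)]
          rw [List.getElem_drop]
          congr 1
          omega
        -- RHS : ((w ω η L).drop i)[k-a-1] = ω[n-1]
        have hR1 : ((w ω η L).drop i)[k - a - 1]'(by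
              rw [List.length_drop, length_w]
              have : 2 * η.length ≤ L * η.length := by
                apply Nat.mul_le_mul_right
                omega
              omega) = ω[n - 1]'(by omega) := by
          rw [List.getElem_drop]
          have : i + (k - a - 1) = n - 1 := by omega
          simp only [this]
          rw [List.getElem_of_eq (show w ω η L = ω ++ wpow η L from rfl),
            List.getElem_append_left (by omega)]
        rw [hL1, hR1] at hget
        have hω : ω.getLast? = some (ω[n - 1]'(by omega)) := by
          rw [List.getLast?_eq_getElem?,
            List.getElem?_eq_getElem (show ω.length - 1 < ω.length by omega)]
        have hηl : η.getLast? = some (η[k - 1]'(by omega)) := by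
          rw [List.getLast?_eq_getElem?, show η.length - 1 = k - 1 by omega,
            List.getElem?_eq_getElem (by omega)]
        apply hlast
        rw [hω, hηl, hget]
      · -- p > n
        set q := p - n with hqdef
        have hq0 : 0 < q := by omega
        have hqk : q < k := by omega
        rw [hq] at hpre3
        exact X2 hη hk hk0 hl2 (by omega) hq0 hqk hpre3

end Occur



end KX

namespace KX

open Finset

lemma sum_shift (n M K : ℕ) (f : ℕ → ℕ) :
    ∑ x ∈ Ico (n + K) (n + M + K), f x = ∑ x ∈ Ico n (n + M), f (x + K) := by
  rw [← Finset.map_add_right_Ico n (n + M) K, Finset.sum_map]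
  rfl

lemma sum_key (n M K : ℕ) (f : ℕ → ℕ) :
    ∑ x ∈ range (n + M + K), f x
      = ((∑ x ∈ range n, f x) + (∑ x ∈ Ico n (n + M), f (x + K)))
        + (∑ x ∈ Ico n (n + K), f x) := by
  rw [range_eq_Ico,
    ← Finset.sum_Ico_consecutive f (Nat.zero_le n) (by omega : n ≤ n + M + K),
    ← Finset.sum_Ico_consecutive f (by omega : n ≤ n + K) (by omega : n + K ≤ n + M + K),
    ← range_eq_Ico, sum_shift n M K f]
  ring

lemma sum_splitM {n N : ℕ} (h : n ≤ N) (f : ℕ → ℕ) :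
    ∑ x ∈ range N, f x = (∑ x ∈ range n, f x) + (∑ x ∈ Ico n N, f x) := by
  rw [range_eq_Ico, ← Finset.sum_Ico_consecutive f (Nat.zero_le n) h, ← range_eq_Ico]

lemma step_sum (n K M : ℕ) (F G : ℕ → ℕ → ℕ)
    (hAAd : ∀ i < n, G i i = F i i + K)
    (hAAo : ∀ i < n, ∀ j < n, i ≠ j → G i j = F i j)
    (hAC : ∀ i < n, ∀ j, n ≤ j → j < n + M → G i (j + K) = F i j)
    (hCA : ∀ i, n ≤ i → i < n + M → ∀ j < n, G (i + K) j = F i j)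
    (hCC : ∀ i, n ≤ i → i < n + M → ∀ j, n ≤ j → j < n + M → G (i + K) (j + K) = F i j) :
    ∑ i ∈ range (n + M + K), ∑ j ∈ range (n + M + K), G i j
      = (∑ i ∈ range (n + M), ∑ j ∈ range (n + M), F i j) + n * K
        + ((∑ i ∈ Ico n (n + K), ∑ j ∈ range n, G i j)
          + (∑ i ∈ range n, ∑ j ∈ Ico n (n + K), G i j)
          + (∑ i ∈ Ico n (n + K), ∑ j ∈ Ico n (n + M + K), G i j)
          + (∑ i ∈ Ico n (n + M), ∑ j ∈ Ico n (n + K), G (i + K) j)) := by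
  -- row split
  rw [sum_key n M K (fun i => ∑ j ∈ range (n + M + K), G i j)]
  -- A rows: split columns
  have hA : ∑ i ∈ range n, ∑ j ∈ range (n + M + K), G i j
      = ((∑ i ∈ range n, ∑ j ∈ range n, G i j)
          + (∑ i ∈ range n, ∑ j ∈ Ico n (n + M), F i j))
        + (∑ i ∈ range n, ∑ j ∈ Ico n (n + K), G i j) := by
    rw [← Finset.sum_add_distrib, ← Finset.sum_add_distrib]
    refine Finset.sum_congr rfl fun i hi => ?_
    rw [mem_range] at hi
    rw [sum_key n M K (G i)]
    congr 1
    congr 1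
    exact Finset.sum_congr rfl fun j hj => by
      rw [mem_Ico] at hj
      exact hAC i hi j hj.1 hj.2
  -- AA with diag
  have hAA : ∑ i ∈ range n, ∑ j ∈ range n, G i j
      = (∑ i ∈ range n, ∑ j ∈ range n, F i j) + n * K := by
    have h1 : ∀ i ∈ range n, ∑ j ∈ range n, G i j = (∑ j ∈ range n, F i j) + K := by
      intro i hi
      rw [mem_range] at hi
      have h2 : ∀ j ∈ range n, G i j = F i j + (if i = j then K else 0) := by
        intro j hj
        rw [mem_range] at hj
        by_cases h : i = j
        · subst h; rw [hAAd i hi, if_pos rfl]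
        · rw [hAAo i hi j hj h, if_neg h, add_zero]
      rw [Finset.sum_congr rfl h2, Finset.sum_add_distrib, Finset.sum_ite_eq (range n) i
        (fun _ => K), if_pos (mem_range.mpr hi)]
    rw [Finset.sum_congr rfl h1, Finset.sum_add_distrib, Finset.sum_const, card_range,
      smul_eq_mul]
  -- shifted rows
  have hC : ∑ i ∈ Ico n (n + M), ∑ j ∈ range (n + M + K), G (i + K) j
      = ((∑ i ∈ Ico n (n + M), ∑ j ∈ range n, F i j)
          + (∑ i ∈ Ico n (n + M), ∑ j ∈ Ico n (n + M), F i j))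
        + (∑ i ∈ Ico n (n + M), ∑ j ∈ Ico n (n + K), G (i + K) j) := by
    rw [← Finset.sum_add_distrib, ← Finset.sum_add_distrib]
    refine Finset.sum_congr rfl fun i hi => ?_
    rw [mem_Ico] at hi
    rw [sum_key n M K (G (i + K))]
    congr 1
    congr 1
    · exact Finset.sum_congr rfl fun j hj => by
        rw [mem_range] at hj
        exact hCA i hi.1 hi.2 j hj
    · exact Finset.sum_congr rfl fun j hj => by
        rw [mem_Ico] at hj
        exact hCC i hi.1 hi.2 j hj.1 hj.2
  rw [hA, hAA, hC]
  -- assemble with the level-M split of the F-sum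
  have hSF : ∑ i ∈ range (n + M), ∑ j ∈ range (n + M), F i j
      = ((∑ i ∈ range n, ∑ j ∈ range n, F i j) + (∑ i ∈ range n, ∑ j ∈ Ico n (n + M), F i j))
        + ((∑ i ∈ Ico n (n + M), ∑ j ∈ range n, F i j)
            + (∑ i ∈ Ico n (n + M), ∑ j ∈ Ico n (n + M), F i j)) := by
    rw [sum_splitM (by omega : n ≤ n + M) (fun i => ∑ j ∈ range (n + M), F i j)]
    congr 1
    · rw [← Finset.sum_add_distrib]
      exact Finset.sum_congr rfl fun i _ => sum_splitM (by omega) (F i)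
    · rw [← Finset.sum_add_distrib]
      exact Finset.sum_congr rfl fun i _ => sum_splitM (by omega) (F i)
  have hB : ∑ x ∈ Ico n (n + K), ∑ j ∈ range (n + M + K), G x j
      = (∑ x ∈ Ico n (n + K), ∑ j ∈ range n, G x j)
        + (∑ x ∈ Ico n (n + K), ∑ j ∈ Ico n (n + M + K), G x j) := by
    rw [← Finset.sum_add_distrib]
    exact Finset.sum_congr rfl fun x _ => sum_splitM (by omega) (G x)
  rw [hSF, hB]
  omega

end KX

namespace KX

open Finset

lemma lcp_append_left_of_lt {x y : List Bool} (u : List Bool)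
    (hx : lcp x y < x.length) (hy : lcp x y < y.length) :
    lcp (x ++ u) y = lcp x y := by
  have h := lcp_append_append u [] hx hy
  rwa [List.append_nil] at h

lemma edge_step (n K M : ℕ) (hKM : K ≤ M) (F G : ℕ → ℕ → ℕ)
    (hBA : ∀ i, n ≤ i → i < n + K → ∀ j < n, G i j = F i j)
    (hAB : ∀ i < n, ∀ j, n ≤ j → j < n + K → G i j = F i j)
    (hP : ∀ i, n ≤ i → i < n + K → ∀ j, n ≤ j → j < n + M → G i (j + K) = F i j)
    (hCB : ∀ i, n ≤ i → i < n + M → ∀ j, n ≤ j → j < n + K → G (i + K) j = F i j) :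
    (∑ i ∈ Ico n (n + K), ∑ j ∈ range n, G i j)
      + (∑ i ∈ range n, ∑ j ∈ Ico n (n + K), G i j)
      + (∑ i ∈ Ico n (n + K), ∑ j ∈ Ico n (n + M + K), G i j)
      + (∑ i ∈ Ico n (n + M), ∑ j ∈ Ico n (n + K), G (i + K) j)
    = ((∑ i ∈ Ico n (n + K), ∑ j ∈ range n, F i j)
        + (∑ i ∈ range n, ∑ j ∈ Ico n (n + K), F i j)
        + (∑ i ∈ Ico n (n + K), ∑ j ∈ Ico n (n + M), F i j)
        + (∑ i ∈ Ico n (n + (M - K)), ∑ j ∈ Ico n (n + K), F (i + K) j))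
      + (∑ i ∈ Ico n (n + K), ∑ j ∈ Ico n (n + K), G i j)
      + (∑ i ∈ Ico n (n + K), ∑ j ∈ Ico n (n + K), F i j) := by
  have h1 : ∑ i ∈ Ico n (n + K), ∑ j ∈ range n, G i j
      = ∑ i ∈ Ico n (n + K), ∑ j ∈ range n, F i j := by
    refine Finset.sum_congr rfl fun i hi => Finset.sum_congr rfl fun j hj => ?_
    rw [mem_Ico] at hi; rw [mem_range] at hj
    exact hBA i hi.1 hi.2 j hj
  have h2 : ∑ i ∈ range n, ∑ j ∈ Ico n (n + K), G i j
      = ∑ i ∈ range n, ∑ j ∈ Ico n (n + K), F i j := by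
    refine Finset.sum_congr rfl fun i hi => Finset.sum_congr rfl fun j hj => ?_
    rw [mem_range] at hi; rw [mem_Ico] at hj
    exact hAB i hi j hj.1 hj.2
  have h3 : ∑ i ∈ Ico n (n + K), ∑ j ∈ Ico n (n + M + K), G i j
      = (∑ i ∈ Ico n (n + K), ∑ j ∈ Ico n (n + K), G i j)
        + (∑ i ∈ Ico n (n + K), ∑ j ∈ Ico n (n + M), F i j) := by
    rw [← Finset.sum_add_distrib]
    refine Finset.sum_congr rfl fun i hi => ?_
    rw [mem_Ico] at hi
    rw [← Finset.sum_Ico_consecutive (G i) (by omega : n ≤ n + K) (by omega : n + K ≤ n + M + K)]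
    congr 1
    rw [show n + M + K = n + M + K from rfl]
    have hsh := sum_shift n M K (G i)
    rw [hsh]
    refine Finset.sum_congr rfl fun j hj => ?_
    rw [mem_Ico] at hj
    exact hP i hi.1 hi.2 j hj.1 hj.2
  have h4 : ∑ i ∈ Ico n (n + M), ∑ j ∈ Ico n (n + K), G (i + K) j
      = (∑ i ∈ Ico n (n + K), ∑ j ∈ Ico n (n + K), F i j)
        + (∑ i ∈ Ico n (n + (M - K)), ∑ j ∈ Ico n (n + K), F (i + K) j) := by
    have hstep1 : ∑ i ∈ Ico n (n + M), ∑ j ∈ Ico n (n + K), G (i + K) j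
        = ∑ i ∈ Ico n (n + M), ∑ j ∈ Ico n (n + K), F i j := by
      refine Finset.sum_congr rfl fun i hi => Finset.sum_congr rfl fun j hj => ?_
      rw [mem_Ico] at hi hj
      exact hCB i hi.1 hi.2 j hj.1 hj.2
    rw [hstep1,
      ← Finset.sum_Ico_consecutive (fun i => ∑ j ∈ Ico n (n + K), F i j)
        (by omega : n ≤ n + K) (by omega : n + K ≤ n + M)]
    congr 1
    have hsh := sum_shift n (M - K) K (fun i => ∑ j ∈ Ico n (n + K), F i j)
    rw [show n + (M - K) + K = n + M by omega] at hsh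
    rw [hsh]
  rw [h1, h2, h3, h4]
  ring

end KX

namespace KX

section Blocks

variable {ω η : List Bool} {k ℓ : ℕ}

/-- the lcp kernel at level `L` -/
def Fk (ω η : List Bool) (L i j : ℕ) : ℕ :=
  lcp ((w ω η L).drop i) ((w ω η L).drop j)

lemma Fk_comm (L i j : ℕ) : Fk ω η L i j = Fk ω η L j i := lcp_comm _ _

lemma lw (hk : η.length = k) (L : ℕ) : (w ω η L).length = ω.length + k * L := by
  rw [length_w, hk]; ring

lemma lend (hk : η.length = k) (L i : ℕ) :
    ((w ω η L).drop i).length = ω.length + k * L - i := by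
  rw [List.length_drop, lw hk]

lemma lenp (hk : η.length = k) (L a : ℕ) :
    ((wpow η L).drop a).length = k * L - a := by
  rw [List.length_drop, length_wpow, hk, Nat.mul_comm]

lemma dlow (hk : η.length = k) {L i : ℕ} (hi : i ≤ ω.length + k * L) :
    (w ω η (L + 1)).drop i = (w ω η L).drop i ++ η :=
  drop_w_low (by rw [show L * η.length = k * L by rw [hk]; ring]; omega)

lemma dshift (hk : η.length = k) {L j : ℕ} (hj : ω.length ≤ j) :
    (w ω η (L + 1)).drop (j + k) = (w ω η L).drop j := by
  have h := drop_w_shift (ω := ω) (η := η) (L := L) hj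
  rwa [hk] at h

lemma Om (hk : η.length = k) (hk0 : 0 < k) (hl2 : 2 ≤ ℓ)
    (hocc : occ (w ω η ℓ) (wpow η ℓ) = 1) {M p q : ℕ}
    (hM : ℓ ≤ M) (hpq : p < q) (hq : q < ω.length) :
    ¬ ((w ω η M).drop q <+: (w ω η M).drop p) := by
  intro hpre
  have h5 := hpre.drop (ω.length - q)
  rw [List.drop_drop, List.drop_drop, show q + (ω.length - q) = ω.length by omega] at h5
  have h6 : (w ω η M).drop ω.length = wpow η M := by
    show (ω ++ wpow η M).drop ω.length = wpow η M
    exact List.drop_left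
  rw [h6] at h5
  exact X1 hk hk0 hl2 hocc hM (by omega : p + (ω.length - q) < ω.length)
    ((wpow_prefix η hM).trans h5)

lemma AAd (hk : η.length = k) {M i : ℕ} (hi : i < ω.length) :
    Fk ω η (M + 1) i i = Fk ω η M i i + k := by
  rw [Fk, Fk, lcp_self, lcp_self, lend hk, lend hk]
  have e : k * (M + 1) = k * M + k := by ring
  omega

lemma AAo_lt (hk : η.length = k) (hk0 : 0 < k) (hl2 : 2 ≤ ℓ)
    (hocc : occ (w ω η ℓ) (wpow η ℓ) = 1) {M i j : ℕ}
    (hM : ℓ ≤ M) (hij : i < j) (hj : j < ω.length) :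
    Fk ω η (M + 1) i j = Fk ω η M i j := by
  rw [Fk, Fk, dlow hk (by omega), dlow hk (by omega)]
  have hnp := Om hk hk0 hl2 hocc hM hij hj
  have hle := lcp_le_right ((w ω η M).drop i) ((w ω η M).drop j)
  have hlt : lcp ((w ω η M).drop i) ((w ω η M).drop j) < ((w ω η M).drop j).length := by
    rcases Nat.lt_or_ge (lcp ((w ω η M).drop i) ((w ω η M).drop j))
      (((w ω η M).drop j).length) with h | h
    · exact h
    · exact absurd (prefix_of_lcp_eq_length (by omega)) hnp
  apply lcp_append_append
  · rw [lend hk] at *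
    omega
  · exact hlt

lemma AAo (hk : η.length = k) (hk0 : 0 < k) (hl2 : 2 ≤ ℓ)
    (hocc : occ (w ω η ℓ) (wpow η ℓ) = 1) {M i j : ℕ}
    (hM : ℓ ≤ M) (hi : i < ω.length) (hj : j < ω.length) (hij : i ≠ j) :
    Fk ω η (M + 1) i j = Fk ω η M i j := by
  rcases Nat.lt_or_ge i j with h | h
  · exact AAo_lt hk hk0 hl2 hocc hM h hj
  · rw [Fk_comm, AAo_lt hk hk0 hl2 hocc hM (by omega) hi, Fk_comm]

lemma ACl (hk : η.length = k) {M i j : ℕ} (hi : i < ω.length) (hj1 : ω.length ≤ j) :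
    Fk ω η (M + 1) i (j + k) = Fk ω η M i j := by
  rw [Fk, Fk, dshift hk hj1, dlow hk (by omega)]
  apply lcp_append_right_of_le
  rw [lend hk, lend hk]
  omega

lemma CAl (hk : η.length = k) {M i j : ℕ} (hi : ω.length ≤ i) (hj : j < ω.length) :
    Fk ω η (M + 1) (i + k) j = Fk ω η M i j := by
  rw [Fk_comm, ACl hk hj hi, Fk_comm]

lemma CCl (hk : η.length = k) {M i j : ℕ} (hi : ω.length ≤ i) (hj : ω.length ≤ j) :
    Fk ω η (M + 1) (i + k) (j + k) = Fk ω η M i j := by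
  rw [Fk, Fk, dshift hk hi, dshift hk hj]

lemma PH (hη : IsPrimeWord η) (hk : η.length = k) (hk0 : 0 < k) {M a b : ℕ}
    (hM : 2 ≤ M) (ha : a < k) :
    lcp ((wpow η M).drop a ++ η) ((wpow η M).drop b)
      = lcp ((wpow η M).drop a) ((wpow η M).drop b) := by
  have h2k : k * 2 ≤ k * M := Nat.mul_le_mul_left k hM
  rcases le_or_gt a b with hab | hab
  · apply lcp_append_right_of_le
    rw [lenp hk, lenp hk]
    omega
  · -- b < a < k
    have hval := lcp_drop_drop hη hk (L := M) (M := M) (a := a) (b := b)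
      (by omega) (by omega)
      (by rw [Nat.mod_eq_of_lt ha, Nat.mod_eq_of_lt (by omega)]; omega)
    have hphi : Phi η (a % k) (b % k) < k :=
      Phi_lt hη hk (Nat.mod_lt _ hk0) (Nat.mod_lt _ hk0)
        (by rw [Nat.mod_eq_of_lt ha, Nat.mod_eq_of_lt (by omega)]; omega)
    apply lcp_append_left_of_lt
    · rw [hval, lenp hk]; omega
    · rw [hval, lenp hk]; omega

lemma BAe (hη : IsPrimeWord η) (hk : η.length = k) (hk0 : 0 < k) (hl2 : 2 ≤ ℓ)
    (hocc : occ (w ω η ℓ) (wpow η ℓ) = 1) (hlast : ω.getLast? ≠ η.getLast?)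
    {i j : ℕ} (hi1 : ω.length ≤ i) (hi2 : i < ω.length + k) (hj : j < ω.length) :
    Fk ω η (ℓ + 2) i j = Fk ω η (ℓ + 1) i j := by
  have hmul : k * 1 ≤ k * (ℓ + 1) := Nat.mul_le_mul_left k (by omega)
  rw [Fk, Fk, show ℓ + 2 = (ℓ + 1) + 1 from rfl, dlow (L := ℓ + 1) (i := i) hk (by omega),
    dlow (L := ℓ + 1) (i := j) hk (by omega)]
  have hx : (w ω η (ℓ + 1)).drop i = (wpow η (ℓ + 1)).drop (i - ω.length) :=
    drop_w_high hi1
  have hnp := NP hη hk hk0 hl2 hocc (L := ℓ + 1) (a := i - ω.length) (i := j)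
    le_rfl (by omega) hj hlast
  rw [← hx] at hnp
  have hle := lcp_le_left ((w ω η (ℓ + 1)).drop i) ((w ω η (ℓ + 1)).drop j)
  have hlt : lcp ((w ω η (ℓ + 1)).drop i) ((w ω η (ℓ + 1)).drop j)
      < ((w ω η (ℓ + 1)).drop i).length := by
    rcases Nat.lt_or_ge (lcp ((w ω η (ℓ + 1)).drop i) ((w ω η (ℓ + 1)).drop j))
      (((w ω η (ℓ + 1)).drop i).length) with h | h
    · exact h
    · exfalso
      apply hnp
      apply prefix_of_lcp_eq_length (x := (w ω η (ℓ + 1)).drop j)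
      rw [lcp_comm]
      omega
  apply lcp_append_append
  · exact hlt
  · rw [lend hk] at *
    omega

lemma ABe (hη : IsPrimeWord η) (hk : η.length = k) (hk0 : 0 < k) (hl2 : 2 ≤ ℓ)
    (hocc : occ (w ω η ℓ) (wpow η ℓ) = 1) (hlast : ω.getLast? ≠ η.getLast?)
    {i j : ℕ} (hi : i < ω.length) (hj1 : ω.length ≤ j) (hj2 : j < ω.length + k) :
    Fk ω η (ℓ + 2) i j = Fk ω η (ℓ + 1) i j := by
  rw [Fk_comm, BAe hη hk hk0 hl2 hocc hlast hj1 hj2 hi, Fk_comm]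

lemma Pe (hη : IsPrimeWord η) (hk : η.length = k) (hk0 : 0 < k) (hl2 : 2 ≤ ℓ)
    {i j : ℕ} (hi1 : ω.length ≤ i) (hi2 : i < ω.length + k) (hj1 : ω.length ≤ j) :
    Fk ω η (ℓ + 2) i (j + k) = Fk ω η (ℓ + 1) i j := by
  have hmul : k * 1 ≤ k * (ℓ + 1) := Nat.mul_le_mul_left k (by omega)
  rw [Fk, Fk, show ℓ + 2 = (ℓ + 1) + 1 from rfl, dshift hk hj1,
    dlow (L := ℓ + 1) (i := i) hk (by omega), drop_w_high hi1, drop_w_high hj1]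
  exact PH hη hk hk0 (by omega) (by omega)

lemma CBe (hη : IsPrimeWord η) (hk : η.length = k) (hk0 : 0 < k) (hl2 : 2 ≤ ℓ)
    {i j : ℕ} (hi1 : ω.length ≤ i) (hj1 : ω.length ≤ j) (hj2 : j < ω.length + k) :
    Fk ω η (ℓ + 2) (i + k) j = Fk ω η (ℓ + 1) i j := by
  have hmul : k * 1 ≤ k * (ℓ + 1) := Nat.mul_le_mul_left k (by omega)
  rw [Fk, Fk, show ℓ + 2 = (ℓ + 1) + 1 from rfl, dshift hk hi1,
    dlow (L := ℓ + 1) (i := j) hk (by omega), drop_w_high hi1, drop_w_high hj1,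
    lcp_comm ((wpow η (ℓ+1)).drop (i - ω.length)),
    lcp_comm ((wpow η (ℓ+1)).drop (i - ω.length))]
  exact PH hη hk hk0 (by omega) (by omega)

lemma BBdiag (hk : η.length = k) {M i : ℕ} :
    Fk ω η M i i = ω.length + k * M - i := by
  rw [Fk, lcp_self, lend hk]

lemma BBoff (hη : IsPrimeWord η) (hk : η.length = k) (hk0 : 0 < k) {M i j : ℕ}
    (hM : 2 ≤ M) (hi1 : ω.length ≤ i) (hi2 : i < ω.length + k)
    (hj1 : ω.length ≤ j) (hj2 : j < ω.length + k) (hij : i ≠ j) :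
    Fk ω η M i j < k := by
  have h2k : k * 2 ≤ k * M := Nat.mul_le_mul_left k hM
  rw [Fk, drop_w_high hi1, drop_w_high hj1,
    lcp_drop_drop hη hk (by omega) (by omega)
      (by rw [Nat.mod_eq_of_lt (by omega), Nat.mod_eq_of_lt (by omega)]; omega)]
  exact Phi_lt hη hk (Nat.mod_lt _ hk0) (Nat.mod_lt _ hk0)
    (by rw [Nat.mod_eq_of_lt (by omega), Nat.mod_eq_of_lt (by omega)]; omega)

end Blocks

end KX

namespace KX

open Finset

lemma BB_low {ω η : List Bool} {k M : ℕ} (hη : IsPrimeWord η) (hk : η.length = k)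
    (hk0 : 0 < k) (hM : 2 ≤ M) :
    k * (k * M - k + 1)
      ≤ ∑ i ∈ Ico ω.length (ω.length + k), ∑ j ∈ Ico ω.length (ω.length + k), Fk ω η M i j := by
  have hcard : (Ico ω.length (ω.length + k)).card = k := by rw [Nat.card_Ico]; omega
  have hrow : ∀ i ∈ Ico ω.length (ω.length + k),
      k * M - k + 1 ≤ ∑ j ∈ Ico ω.length (ω.length + k), Fk ω η M i j := by
    intro i hi
    have h1 : Fk ω η M i i ≤ ∑ j ∈ Ico ω.length (ω.length + k), Fk ω η M i j :=
      Finset.single_le_sum (fun j _ => Nat.zero_le _) hi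
    rw [BBdiag hk] at h1
    rw [Finset.mem_Ico] at hi
    have h2k : k * 2 ≤ k * M := Nat.mul_le_mul_left k hM
    omega
  calc k * (k * M - k + 1) = (Ico ω.length (ω.length + k)).card • (k * M - k + 1) := by
        rw [hcard, smul_eq_mul]
    _ ≤ _ := Finset.card_nsmul_le_sum _ _ _ hrow

lemma BB_high {ω η : List Bool} {k M : ℕ} (hη : IsPrimeWord η) (hk : η.length = k)
    (hk0 : 0 < k) (hM : 2 ≤ M) :
    (∑ i ∈ Ico ω.length (ω.length + k), ∑ j ∈ Ico ω.length (ω.length + k), Fk ω η M i j)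
      ≤ k * (k * M + (k - 1) * (k - 1)) := by
  have hcard : (Ico ω.length (ω.length + k)).card = k := by rw [Nat.card_Ico]; omega
  have hrow : ∀ i ∈ Ico ω.length (ω.length + k),
      (∑ j ∈ Ico ω.length (ω.length + k), Fk ω η M i j) ≤ k * M + (k - 1) * (k - 1) := by
    intro i hi
    have hsplit : Fk ω η M i i + ∑ j ∈ (Ico ω.length (ω.length + k)).erase i, Fk ω η M i j
        = ∑ j ∈ Ico ω.length (ω.length + k), Fk ω η M i j :=
      Finset.add_sum_erase (Ico ω.length (ω.length + k)) (fun j => Fk ω η M i j) hi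
    have hmem := Finset.mem_Ico.mp hi
    have h2 : ∑ j ∈ (Ico ω.length (ω.length + k)).erase i, Fk ω η M i j
        ≤ ((Ico ω.length (ω.length + k)).erase i).card • (k - 1) := by
      apply Finset.sum_le_card_nsmul
      intro j hj
      rw [Finset.mem_erase] at hj
      have hj2 := Finset.mem_Ico.mp hj.2
      have := BBoff hη hk hk0 hM hmem.1 hmem.2 hj2.1 hj2.2 (Ne.symm hj.1)
      omega
    rw [Finset.card_erase_of_mem hi, hcard, smul_eq_mul] at h2
    have h3 : Fk ω η M i i = ω.length + k * M - i := BBdiag hk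
    have h2k : k * 2 ≤ k * M := Nat.mul_le_mul_left k hM
    omega
  calc _ ≤ (Ico ω.length (ω.length + k)).card • (k * M + (k - 1) * (k - 1)) :=
        Finset.sum_le_card_nsmul _ _ _ hrow
    _ = _ := by rw [hcard, smul_eq_mul]

end KX

/-- let `ω` end in a letter different from the last letter of the
prime word `η` of length `k`, and suppose `η^ℓ` occurs exactly once in `ωη^ℓ`.
Then for `ℓ ≥ 2`,
`0 ≤ Σ(ωη^{ℓ+2}) − 2Σ(ωη^{ℓ+1}) + Σ(ωη^ℓ) − 2k²ℓ < 2k⁴ + 3k`. -/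
theorem kxSum_second_difference (ω η : List Bool) (k : ℕ)
    (hη : IsPrimeWord η) (hk : η.length = k)
    (hω : ω ≠ []) (hlast : ω.getLast? ≠ η.getLast?) :
    ∀ ℓ, 2 ≤ ℓ → occ (ω ++ wpow η ℓ) (wpow η ℓ) = 1 →
      0 ≤ (kxSum (ω ++ wpow η (ℓ + 2)) : ℤ) - 2 * kxSum (ω ++ wpow η (ℓ + 1)) +
            kxSum (ω ++ wpow η ℓ) - 2 * k ^ 2 * ℓ ∧
        (kxSum (ω ++ wpow η (ℓ + 2)) : ℤ) - 2 * kxSum (ω ++ wpow η (ℓ + 1)) +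
            kxSum (ω ++ wpow η ℓ) - 2 * k ^ 2 * ℓ < 2 * k ^ 4 + 3 * k := by
  intro ℓ hl2 hocc0
  have hk0 : 0 < k := by rw [← hk]; exact List.length_pos_iff.mpr hη.1
  have hocc : occ (KX.w ω η ℓ) (wpow η ℓ) = 1 := hocc0
  have hkx : ∀ L, kxSum (ω ++ wpow η L)
      = ∑ i ∈ Finset.range (ω.length + k * L), ∑ j ∈ Finset.range (ω.length + k * L),
          KX.Fk ω η L i j := by
    intro L
    have h1 := KX.kxSum_eq_sum_lcp (KX.w ω η L)
    rw [KX.lw hk] at h1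
    exact h1
  have e0 := KX.step_sum ω.length k (k * ℓ) (KX.Fk ω η ℓ) (KX.Fk ω η (ℓ + 1))
    (fun i hi => KX.AAd hk hi)
    (fun i hi j hj hij => KX.AAo hk hk0 hl2 hocc le_rfl hi hj hij)
    (fun i hi j hj1 _ => KX.ACl hk hi hj1)
    (fun i hi1 _ j hj => KX.CAl hk hi1 hj)
    (fun i hi1 _ j hj1 _ => KX.CCl hk hi1 hj1)
  have e1 := KX.step_sum ω.length k (k * ℓ + k) (KX.Fk ω η (ℓ + 1)) (KX.Fk ω η (ℓ + 2))
    (fun i hi => KX.AAd hk hi)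
    (fun i hi j hj hij => KX.AAo hk hk0 hl2 hocc (by omega) hi hj hij)
    (fun i hi j hj1 _ => KX.ACl hk hi hj1)
    (fun i hi1 _ j hj => KX.CAl hk hi1 hj)
    (fun i hi1 _ j hj1 _ => KX.CCl hk hi1 hj1)
  have e2 := KX.edge_step ω.length k (k * ℓ + k) (by omega)
    (KX.Fk ω η (ℓ + 1)) (KX.Fk ω η (ℓ + 2))
    (fun i hi1 hi2 j hj => KX.BAe hη hk hk0 hl2 hocc hlast hi1 hi2 hj)
    (fun i hi j hj1 hj2 => KX.ABe hη hk hk0 hl2 hocc hlast hi hj1 hj2)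
    (fun i hi1 hi2 j hj1 _ => KX.Pe hη hk hk0 hl2 hi1 hi2 hj1)
    (fun i hi1 _ j hj1 hj2 => KX.CBe hη hk hk0 hl2 hi1 hj1 hj2)
  have hBB1lo := KX.BB_low (ω := ω) (M := ℓ + 1) hη hk hk0 (by omega)
  have hBB1hi := KX.BB_high (ω := ω) (M := ℓ + 1) hη hk hk0 (by omega)
  have hBB2lo := KX.BB_low (ω := ω) (M := ℓ + 2) hη hk hk0 (by omega)
  have hBB2hi := KX.BB_high (ω := ω) (M := ℓ + 2) hη hk hk0 (by omega)
  -- normalize arithmetic shapes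
  have hx1 : k * (ℓ + 1) = k * ℓ + k := by ring
  have hx2 : k * (ℓ + 2) = k * ℓ + k + k := by ring
  rw [show k * ℓ + k - k = k * ℓ by omega] at e2
  rw [show ω.length + (k * ℓ + k) = ω.length + k * ℓ + k by ring] at e1 e2
  rw [show k * (ℓ + 1) - k + 1 = k * ℓ + 1 by omega] at hBB1lo
  rw [show k * (ℓ + 2) - k + 1 = k * ℓ + k + 1 by omega] at hBB2lo
  rw [show k * (ℓ + 1) + (k - 1) * (k - 1) = k * ℓ + k + (k - 1) * (k - 1) by omega] at hBB1hi
  rw [show k * (ℓ + 2) + (k - 1) * (k - 1) = k * ℓ + k + k + (k - 1) * (k - 1) by omega] at hBB2hi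
  rw [hkx (ℓ + 2), hkx (ℓ + 1), hkx ℓ,
    show ω.length + k * (ℓ + 2) = ω.length + k * ℓ + k + k by rw [hx2]; ring,
    show ω.length + k * (ℓ + 1) = ω.length + k * ℓ + k by rw [hx1]; ring]
  -- key combination
  have hkey : (∑ i ∈ Finset.range (ω.length + k * ℓ + k + k),
        ∑ j ∈ Finset.range (ω.length + k * ℓ + k + k), KX.Fk ω η (ℓ + 2) i j)
      + (∑ i ∈ Finset.range (ω.length + k * ℓ),
        ∑ j ∈ Finset.range (ω.length + k * ℓ), KX.Fk ω η ℓ i j)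
      = (∑ i ∈ Finset.range (ω.length + k * ℓ + k),
          ∑ j ∈ Finset.range (ω.length + k * ℓ + k), KX.Fk ω η (ℓ + 1) i j)
        + (∑ i ∈ Finset.range (ω.length + k * ℓ + k),
          ∑ j ∈ Finset.range (ω.length + k * ℓ + k), KX.Fk ω η (ℓ + 1) i j)
        + (∑ i ∈ Finset.Ico ω.length (ω.length + k),
            ∑ j ∈ Finset.Ico ω.length (ω.length + k), KX.Fk ω η (ℓ + 2) i j)
        + (∑ i ∈ Finset.Ico ω.length (ω.length + k),
            ∑ j ∈ Finset.Ico ω.length (ω.length + k), KX.Fk ω η (ℓ + 1) i j) := by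
    omega
  constructor
  · -- lower bound
    have hq : k * (k * ℓ + 1) + k * (k * ℓ + k + 1) = 2 * k ^ 2 * ℓ + k * k + 2 * k := by
      ring
    have hN : 2 * k ^ 2 * ℓ
        ≤ (∑ i ∈ Finset.Ico ω.length (ω.length + k),
            ∑ j ∈ Finset.Ico ω.length (ω.length + k), KX.Fk ω η (ℓ + 2) i j)
          + (∑ i ∈ Finset.Ico ω.length (ω.length + k),
            ∑ j ∈ Finset.Ico ω.length (ω.length + k), KX.Fk ω η (ℓ + 1) i j) := by
      omega
    have hNz : (2 * k ^ 2 * ℓ : ℤ)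
        + (∑ i ∈ Finset.range (ω.length + k * ℓ + k),
            ∑ j ∈ Finset.range (ω.length + k * ℓ + k), KX.Fk ω η (ℓ + 1) i j)
        + (∑ i ∈ Finset.range (ω.length + k * ℓ + k),
            ∑ j ∈ Finset.range (ω.length + k * ℓ + k), KX.Fk ω η (ℓ + 1) i j)
        ≤ (∑ i ∈ Finset.range (ω.length + k * ℓ + k + k),
            ∑ j ∈ Finset.range (ω.length + k * ℓ + k + k), KX.Fk ω η (ℓ + 2) i j)
          + (∑ i ∈ Finset.range (ω.length + k * ℓ),
            ∑ j ∈ Finset.range (ω.length + k * ℓ), KX.Fk ω η ℓ i j) := by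
      exact_mod_cast (by omega :
        2 * k ^ 2 * ℓ
          + (∑ i ∈ Finset.range (ω.length + k * ℓ + k),
              ∑ j ∈ Finset.range (ω.length + k * ℓ + k), KX.Fk ω η (ℓ + 1) i j)
          + (∑ i ∈ Finset.range (ω.length + k * ℓ + k),
              ∑ j ∈ Finset.range (ω.length + k * ℓ + k), KX.Fk ω η (ℓ + 1) i j)
          ≤ (∑ i ∈ Finset.range (ω.length + k * ℓ + k + k),
              ∑ j ∈ Finset.range (ω.length + k * ℓ + k + k), KX.Fk ω η (ℓ + 2) i j)
            + (∑ i ∈ Finset.range (ω.length + k * ℓ),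
              ∑ j ∈ Finset.range (ω.length + k * ℓ), KX.Fk ω η ℓ i j))
    linarith
  · -- upper bound
    have h3 : k * (k * ℓ + k + (k - 1) * (k - 1)) + k * (k * ℓ + k + k + (k - 1) * (k - 1))
        < 2 * k ^ 2 * ℓ + 2 * k ^ 4 + 3 * k := by
      obtain ⟨m, rfl⟩ : ∃ m, k = m + 1 := ⟨k - 1, by omega⟩
      simp only [Nat.add_sub_cancel]
      nlinarith [sq_nonneg m, Nat.zero_le (m * m * m), Nat.zero_le m]
    have hN2 : (∑ i ∈ Finset.range (ω.length + k * ℓ + k + k),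
          ∑ j ∈ Finset.range (ω.length + k * ℓ + k + k), KX.Fk ω η (ℓ + 2) i j)
        + (∑ i ∈ Finset.range (ω.length + k * ℓ),
          ∑ j ∈ Finset.range (ω.length + k * ℓ), KX.Fk ω η ℓ i j)
        < (∑ i ∈ Finset.range (ω.length + k * ℓ + k),
            ∑ j ∈ Finset.range (ω.length + k * ℓ + k), KX.Fk ω η (ℓ + 1) i j)
          + (∑ i ∈ Finset.range (ω.length + k * ℓ + k),
            ∑ j ∈ Finset.range (ω.length + k * ℓ + k), KX.Fk ω η (ℓ + 1) i j)
          + 2 * k ^ 2 * ℓ + 2 * k ^ 4 + 3 * k := by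
      omega
    have hN2z := (by exact_mod_cast hN2 :
      ((∑ i ∈ Finset.range (ω.length + k * ℓ + k + k),
          ∑ j ∈ Finset.range (ω.length + k * ℓ + k + k), KX.Fk ω η (ℓ + 2) i j : ℕ) : ℤ)
        + (∑ i ∈ Finset.range (ω.length + k * ℓ),
          ∑ j ∈ Finset.range (ω.length + k * ℓ), KX.Fk ω η ℓ i j)
        < (∑ i ∈ Finset.range (ω.length + k * ℓ + k),
            ∑ j ∈ Finset.range (ω.length + k * ℓ + k), KX.Fk ω η (ℓ + 1) i j)
          + (∑ i ∈ Finset.range (ω.length + k * ℓ + k),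
            ∑ j ∈ Finset.range (ω.length + k * ℓ + k), KX.Fk ω η (ℓ + 1) i j)
          + 2 * k ^ 2 * ℓ + 2 * k ^ 4 + 3 * k)
    linarith
end

section
/- Let x = 0^{k_1} 1 0^{k_2} 1 0^{k_3} 1 ... be an infinite binary sequence with liminf_{n→∞} k_{n+1}/k_n > 1. Then liminf_{n→∞} Σ(x_1...x_n)/n³ > 0, while x is not eventually periodic. -/
open Filter

lemma occ_finset (w ξ : List Bool) :
    occ w ξ = ((Finset.range w.length).filter (fun i => ξ.isPrefixOf (w.drop i))).card := by
  rw [occ, Finset.range, Finset.filter, Finset.card]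
  simp only [Multiset.range, Multiset.filter_coe, Multiset.coe_card]
  congr 1
  apply List.filter_congr
  intro i _
  cases h : ξ.isPrefixOf (List.drop i w) <;> simp_all [List.isPrefixOf_iff_prefix]

lemma occ_le (w ξ : List Bool) : occ w ξ ≤ w.length := by
  calc ((List.range w.length).filter (fun i => ξ.isPrefixOf (w.drop i))).length
      ≤ (List.range w.length).length := List.length_filter_le _ _
    _ = w.length := List.length_range

lemma sum_occ_le (w : List Bool) :
    ∑ ξ ∈ w.sublists.toFinset.filter (fun ξ => ξ ≠ []), occ w ξ
      ≤ w.length * (w.length + 1) := by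
  set F := w.sublists.toFinset.filter (fun ξ => ξ ≠ []) with hF
  have h1 : ∑ ξ ∈ F, occ w ξ
      = ∑ i ∈ Finset.range w.length, (F.filter (fun ξ => ξ.isPrefixOf (w.drop i))).card := by
    simp only [occ_finset, Finset.card_filter]
    exact Finset.sum_comm
  rw [h1]
  have h2 : ∀ i ∈ Finset.range w.length,
      (F.filter (fun ξ => ξ.isPrefixOf (w.drop i))).card ≤ w.length + 1 := by
    intro i _
    have hsub : F.filter (fun ξ => ξ.isPrefixOf (w.drop i))
        ⊆ (Finset.range (w.length + 1)).image (fun j => (w.drop i).take j) := by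
      intro ξ hξ
      simp only [Finset.mem_filter, hF, List.mem_toFinset, List.mem_sublists] at hξ
      obtain ⟨⟨hsl, _⟩, hpre⟩ := hξ
      rw [List.isPrefixOf_iff_prefix] at hpre
      simp only [Finset.mem_image, Finset.mem_range]
      refine ⟨ξ.length, ?_, ?_⟩
      · exact Nat.lt_succ_of_le (hsl.length_le)
      · exact (List.prefix_iff_eq_take.mp hpre).symm
    calc (F.filter (fun ξ => ξ.isPrefixOf (w.drop i))).card
        ≤ ((Finset.range (w.length + 1)).image (fun j => (w.drop i).take j)).card :=
          Finset.card_le_card hsub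
      _ ≤ (Finset.range (w.length + 1)).card := Finset.card_image_le
      _ = w.length + 1 := Finset.card_range _
  calc ∑ i ∈ Finset.range w.length, (F.filter (fun ξ => ξ.isPrefixOf (w.drop i))).card
      ≤ ∑ i ∈ Finset.range w.length, (w.length + 1) := Finset.sum_le_sum h2
    _ = w.length * (w.length + 1) := by rw [Finset.sum_const, Finset.card_range, smul_eq_mul]

lemma kxSum_le' (w : List Bool) : kxSum w ≤ w.length * (w.length * (w.length + 1)) := by
  calc kxSum w ≤ ∑ ξ ∈ w.sublists.toFinset.filter (fun ξ => ξ ≠ []), w.length * occ w ξ := by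
        apply Finset.sum_le_sum
        intro ξ _
        rw [pow_two]
        exact Nat.mul_le_mul_right _ (occ_le w ξ)
    _ = w.length * ∑ ξ ∈ w.sublists.toFinset.filter (fun ξ => ξ ≠ []), occ w ξ :=
        (Finset.mul_sum _ _ _).symm
    _ ≤ w.length * (w.length * (w.length + 1)) := Nat.mul_le_mul_left _ (sum_occ_le w)

lemma occ_replicate_ge (w : List Bool) (m j : ℕ) (hj1 : 1 ≤ j) (hjm : j ≤ m)
    (h : List.replicate m false <:+: w) : m + 1 - j ≤ occ w (List.replicate j false) := by
  obtain ⟨s, t, hw⟩ := h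
  have hlen : w.length = s.length + m + t.length := by
    rw [← hw]; simp [List.length_append, List.length_replicate]; ring
  rw [occ_finset]
  have hsub : Finset.Icc s.length (s.length + (m - j))
      ⊆ (Finset.range w.length).filter
          (fun i => (List.replicate j false).isPrefixOf (w.drop i)) := by
    intro i hi
    rw [Finset.mem_Icc] at hi
    obtain ⟨h1, h2⟩ := hi
    obtain ⟨d, rfl⟩ := Nat.exists_eq_add_of_le h1
    have hd : d ≤ m - j := by omega
    rw [Finset.mem_filter, Finset.mem_range]
    constructor
    · omega
    · have hdrop : w.drop (s.length + d) = List.replicate (m - d) false ++ t := by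
        rw [← hw, List.append_assoc, List.drop_append, List.drop_append_of_le_length (by simp; omega),
          List.drop_replicate]
        simp [List.drop_eq_nil_of_le]
      rw [hdrop, List.isPrefixOf_iff_prefix]
      have : List.replicate (m - d) false
          = List.replicate j false ++ List.replicate (m - d - j) false := by
        rw [← List.replicate_add]; congr 1; omega
      rw [this, List.append_assoc]
      exact List.prefix_append _ _
  calc m + 1 - j = (Finset.Icc s.length (s.length + (m - j))).card := by
        rw [Nat.card_Icc]; omega
    _ ≤ _ := Finset.card_le_card hsub

lemma kxSum_ge' (w : List Bool) (m : ℕ) (h : List.replicate m false <:+: w) :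
    (m / 2) ^ 3 ≤ kxSum w := by
  set G := (Finset.Icc 1 (m / 2)).image (fun j => List.replicate j false) with hG
  have hGF : G ⊆ w.sublists.toFinset.filter (fun ξ => ξ ≠ []) := by
    intro ξ hξ
    rw [hG, Finset.mem_image] at hξ
    obtain ⟨j, hj, rfl⟩ := hξ
    rw [Finset.mem_Icc] at hj
    rw [Finset.mem_filter, List.mem_toFinset, List.mem_sublists]
    constructor
    · exact ((List.replicate_sublist_replicate false).mpr (by omega)).trans h.sublist
    · intro hnil
      have := congrArg List.length hnil
      simp at this
      omega
  have h1 : ∑ ξ ∈ G, (occ w ξ) ^ 2 ≤ kxSum w :=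
    Finset.sum_le_sum_of_subset hGF
  have h2 : ∑ ξ ∈ G, (occ w ξ) ^ 2
      = ∑ j ∈ Finset.Icc 1 (m / 2), (occ w (List.replicate j false)) ^ 2 := by
    rw [hG, Finset.sum_image]
    intro a _ b _ hab
    have := congrArg List.length hab
    simpa using this
  have h3 : ∀ j ∈ Finset.Icc 1 (m / 2), (m / 2) ^ 2 ≤ (occ w (List.replicate j false)) ^ 2 := by
    intro j hj
    rw [Finset.mem_Icc] at hj
    have := occ_replicate_ge w m j hj.1 (by omega) h
    exact Nat.pow_le_pow_left (by omega) 2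
  have hcard : (Finset.Icc 1 (m / 2)).card = m / 2 := by rw [Nat.card_Icc]; omega
  calc (m / 2) ^ 3 = (Finset.Icc 1 (m / 2)).card * (m / 2) ^ 2 := by rw [hcard]; ring
    _ = ∑ _j ∈ Finset.Icc 1 (m / 2), (m / 2) ^ 2 := by rw [Finset.sum_const, smul_eq_mul]
    _ ≤ ∑ j ∈ Finset.Icc 1 (m / 2), (occ w (List.replicate j false)) ^ 2 :=
        Finset.sum_le_sum h3
    _ = ∑ ξ ∈ G, (occ w ξ) ^ 2 := h2.symm
    _ ≤ kxSum w := h1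

lemma run_infix' (x : ℕ → Bool) (a m n : ℕ) (hmn : a + m ≤ n)
    (hfalse : ∀ i, a ≤ i → i < a + m → x i = false) :
    List.replicate m false <:+: pref x n := by
  have hsplit : List.range n
      = List.range' 0 a ++ List.range' a m ++ List.range' (a + m) (n - a - m) := by
    have e1 : List.range' 0 a ++ List.range' a m ++ List.range' (a + m) (n - a - m)
        = List.range' 0 (m + a) ++ List.range' (a + m) (n - a - m) := by
      congr 1
      simpa [Nat.add_comm] using List.range'_append_1 (s := 0) (m := a) (n := m)
    have e2 : List.range' 0 (m + a) ++ List.range' (a + m) (n - a - m) = List.range' 0 n := by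
      have h := List.range'_append_1 (s := 0) (m := m + a) (n := n - a - m)
      simp only [Nat.zero_add] at h
      rw [show a + m = m + a by omega, h]
      congr 1
      omega
    rw [List.range_eq_range', ← e2, ← e1]
  refine ⟨(List.range' 0 a).map x, (List.range' (a + m) (n - a - m)).map x, ?_⟩
  have hmid : (List.range' a m).map x = List.replicate m false := by
    rw [List.eq_replicate_iff]
    constructor
    · simp
    · intro b hb
      rw [List.mem_map] at hb
      obtain ⟨i, hi, rfl⟩ := hb
      rw [List.mem_range'_1] at hi
      exact hfalse i hi.1 hi.2
  rw [← hmid, pref, hsplit]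
  rw [List.map_append, List.map_append]

set_option maxHeartbeats 1000000 in
/-- for `x = 0^{k_1} 1 0^{k_2} 1 ⋯` with
`liminf k_{n+1}/k_n > 1`, `liminf Σ(x_1...x_n)/n³ > 0` while `x` is not
eventually periodic.  (Here `k i` is `k_{i+1}`, and the `1`s of `x` sit exactly
at the 0-indexed positions `k_1 + 1 + ⋯ + k_n + 1 − 1`.) -/
theorem sparse_ones_liminf_pos_not_periodic (x : ℕ → Bool) (k : ℕ → ℕ)
    (hx : ∀ m, x m = true ↔ ∃ n, m + 1 = ∑ i ∈ Finset.range (n + 1), (k i + 1))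
    (hk : 1 < atTop.liminf (fun n => (k (n + 1) : ℝ) / (k n : ℝ))) :
    0 < atTop.liminf (fun n => (kxSum (pref x n) : ℝ) / (n : ℝ) ^ 3) ∧
      ¬ ∃ N p, 1 ≤ p ∧ ∀ n, N ≤ n → x (n + p) = x n := by
  set S : ℕ → ℕ := fun t => ∑ i ∈ Finset.range t, (k i + 1) with hS
  have hS_succ : ∀ t, S (t + 1) = S t + (k t + 1) := by
    intro t; simp [hS, Finset.sum_range_succ]
  have hS_mono : StrictMono S := strictMono_nat_of_lt_succ (fun t => by rw [hS_succ]; omega)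
  have hS_le : ∀ t, t ≤ S t := fun t => by
    calc t = ∑ i ∈ Finset.range t, 1 := by simp
      _ ≤ S t := Finset.sum_le_sum (fun i _ => by omega)
  -- zeros between the ones
  have hfalse : ∀ t i, S t ≤ i → i + 1 < S (t + 1) → x i = false := by
    intro t i h1 h2
    by_contra hb
    have hbt : x i = true := by revert hb; cases x i <;> simp
    obtain ⟨nn, hnn⟩ := (hx i).mp hbt
    have hnn2 : i + 1 = S (nn + 1) := hnn
    rcases le_or_gt (nn + 1) t with hle | hlt
    · have := hS_mono.monotone hle; omega
    · have := hS_mono.monotone (show t + 1 ≤ nn + 1 by omega); omega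
  have htrue : ∀ t, x (S (t + 1) - 1) = true := by
    intro t
    rw [hx]
    have h1 : (S (t + 1) - 1) + 1 = S (t + 1) := by have := hS_le (t + 1); omega
    exact ⟨t, h1⟩
  -- extract growth rate r > 1
  set u : ℕ → ℝ := fun n => (k (n + 1) : ℝ) / (k n : ℝ) with hu
  have hne : {a : ℝ | ∀ᶠ n in atTop, a ≤ u n}.Nonempty := by
    by_contra hcon
    rw [Set.not_nonempty_iff_eq_empty] at hcon
    rw [liminf_eq, hcon, Real.sSup_empty] at hk
    linarith
  obtain ⟨r, hrmem, hr1⟩ := exists_lt_of_lt_csSup hne (by rw [← liminf_eq]; exact hk)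
  simp only [Set.mem_setOf_eq] at hrmem
  obtain ⟨N, hN⟩ := eventually_atTop.mp hrmem
  have hkpos : ∀ n, N ≤ n → 1 ≤ k n := by
    intro n hn
    by_contra h0
    have hk0 : k n = 0 := by omega
    have := hN n hn
    rw [hu] at this
    simp only [hk0, Nat.cast_zero, div_zero] at this
    linarith
  have hgrow : ∀ n, N ≤ n → r * k n ≤ k (n + 1) := by
    intro n hn
    have h1 := hN n hn
    have h2 : (0 : ℝ) < k n := by
      have := hkpos n hn; exact_mod_cast Nat.lt_of_lt_of_le Nat.zero_lt_one this
    rw [hu, le_div_iff₀ h2] at h1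
    linarith [h1]
  have hksucc : ∀ n, N ≤ n → k n + 1 ≤ k (n + 1) := by
    intro n hn
    have h1 := hgrow n hn
    have h2 : (1 : ℝ) ≤ k n := by exact_mod_cast hkpos n hn
    have : (k n : ℝ) < k (n + 1) := by nlinarith
    exact_mod_cast Nat.succ_le_of_lt (by exact_mod_cast this)
  have hklin : ∀ j, 1 + j ≤ k (N + j) := by
    intro j
    induction j with
    | zero => simpa using hkpos N le_rfl
    | succ j ih =>
        have h := hksucc (N + j) (by omega)
        rw [show N + (j + 1) = (N + j) + 1 by omega]
        omega
  constructor
  · -- the liminf part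
    set B : ℝ := 2 * r / (r - 1) with hB
    have hrpos : (0 : ℝ) < r - 1 := by linarith
    have hB2 : 2 ≤ B := by
      rw [hB, le_div_iff₀ hrpos]; nlinarith
    have hBpos : (0 : ℝ) < B := by linarith
    have hsum : ∀ t, N + 1 ≤ t → (∑ i ∈ Finset.Ico N t, ((k i : ℝ) + 1)) ≤ B * k (t - 1) := by
      intro t ht
      induction t, ht using Nat.le_induction with
      | base =>
          rw [Finset.sum_Ico_eq_sum_range]
          simp only [Nat.add_sub_cancel_left, Finset.range_one, Finset.sum_singleton, Nat.add_zero]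
          have h2 : (1 : ℝ) ≤ k N := by exact_mod_cast hkpos N le_rfl
          simp only [Nat.add_sub_cancel]
          nlinarith
      | succ t ht ih =>
          rw [Finset.sum_Ico_succ_top (by omega)]
          have e1 : (k (t - 1) : ℝ) ≤ k t / r := by
            have := hgrow (t - 1) (by omega)
            rw [show t - 1 + 1 = t by omega] at this
            rw [le_div_iff₀ (by linarith)]
            linarith [this]
          have h2 : (1 : ℝ) ≤ k t := by exact_mod_cast hkpos t (by omega)
          have e2 : B * (k t / r) + (k t + 1) ≤ B * k t := by
            have hBr : B * (r - 1) = 2 * r := by rw [hB]; field_simp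
            have hrpos' : (0 : ℝ) < r := by linarith
            rw [div_eq_mul_inv]
            have : B * ((k t : ℝ) * r⁻¹) = B * k t - 2 * k t := by
              field_simp
              nlinarith [hBr]
            rw [this]
            nlinarith
          simp only [Nat.add_sub_cancel]
          calc (∑ i ∈ Finset.Ico N t, ((k i : ℝ) + 1)) + (k t + 1)
              ≤ B * k (t - 1) + (k t + 1) := by linarith
            _ ≤ B * (k t / r) + (k t + 1) := by
                have := mul_le_mul_of_nonneg_left e1 (le_of_lt hBpos); linarith
            _ ≤ B * k t := e2
    have hSbound : ∀ t, N + 1 ≤ t → (S t : ℝ) ≤ S N + B * k (t - 1) := by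
      intro t ht
      have hsplit : S N + ∑ i ∈ Finset.Ico N t, (k i + 1) = S t :=
        Finset.sum_range_add_sum_Ico _ (by omega)
      have : (S t : ℝ) = S N + ∑ i ∈ Finset.Ico N t, ((k i : ℝ) + 1) := by
        rw [← hsplit]; push_cast; ring
      rw [this]
      linarith [hsum t ht]
    set c : ℝ := 1 / (4 * B) with hc
    have hcpos : 0 < c := by positivity
    have hc8 : c ≤ 1 / 8 := by
      rw [hc, div_le_div_iff₀ (by linarith) (by norm_num)]
      linarith
    -- eventual run of zeros of length ≥ c n
    have hrun : ∀ᶠ n : ℕ in atTop, ∃ m : ℕ, c * n ≤ (m : ℝ) ∧ List.replicate m false <:+: pref x n := by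
      rw [eventually_atTop]
      refine ⟨max (S (N + 2)) (4 * S N), fun n hn => ?_⟩
      have hn1 : S (N + 2) ≤ n := le_trans (le_max_left _ _) hn
      have hn2 : 4 * S N ≤ n := le_trans (le_max_right _ _) hn
      set t := Nat.findGreatest (fun t => S t ≤ n) n with htdef
      have ht1 : S t ≤ n := by
        rw [htdef]
        exact Nat.findGreatest_spec (P := fun t => S t ≤ n) (Nat.zero_le n) (by simp [hS])
      have ht2 : n < S (t + 1) := by
        rcases le_or_gt (t + 1) n with hle | hlt
        · by_contra hcon
          push_neg at hcon
          exact Nat.findGreatest_is_greatest (P := fun t => S t ≤ n)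
            (by rw [← htdef]; exact Nat.lt_succ_self t) hle hcon
        · have := hS_le (t + 1); omega
      have htN : N + 1 ≤ t := by
        rw [htdef]
        refine Nat.le_findGreatest ?_ ?_
        · exact le_trans (le_trans (hS_le (N + 1)) (hS_mono.monotone (by omega))) hn1
        · exact le_trans (hS_mono.monotone (show N + 1 ≤ N + 2 by omega)) hn1
      rcases le_or_gt (2 * S t) n with hca | hcb
      · -- big tail run: positions S t .. n-1
        refine ⟨n - S t, ?_, ?_⟩
        · have : (c * n : ℝ) ≤ n / 2 := by
            rcases Nat.eq_zero_or_pos n with h0 | h0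
            · simp [h0]
            · have hnn : (0:ℝ) < n := by exact_mod_cast h0
              nlinarith
          have : ((n - S t : ℕ) : ℝ) ≥ n / 2 := by
            have h1 : (S t : ℝ) ≤ n / 2 := by
              have : (2 * S t : ℝ) ≤ n := by exact_mod_cast hca
              linarith
            have h2 : ((n - S t : ℕ) : ℝ) = (n : ℝ) - S t := by
              have : S t ≤ n := ht1; push_cast [this]; ring
            linarith
          linarith
        · apply run_infix' x (S t) (n - S t) n (by omega)
          intro i hi1 hi2
          exact hfalse t i hi1 (by omega)
      · -- run before the last one: positions S (t-1) .. S t - 2, length k (t-1)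
        refine ⟨k (t - 1), ?_, ?_⟩
        · have hb1 : (S t : ℝ) ≤ S N + B * k (t - 1) := hSbound t htN
          have hb2 : (n : ℝ) / 2 < S t := by
            have : (n : ℝ) < 2 * S t := by exact_mod_cast hcb
            linarith
          have hb3 : (S N : ℝ) ≤ n / 4 := by
            have : (4 * S N : ℝ) ≤ n := by exact_mod_cast hn2
            linarith
          have hb4 : (n : ℝ) / 4 ≤ B * k (t - 1) := by linarith
          rw [hc]
          rw [div_mul_eq_mul_div, one_mul, div_le_iff₀ (by linarith)]
          calc (n : ℝ) = 4 * (n / 4) := by ring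
            _ ≤ 4 * (B * k (t - 1)) := by linarith
            _ = (k (t - 1) : ℝ) * (4 * B) := by ring
        · have hstep : S (t - 1) + (k (t - 1) + 1) = S t := by
            have := hS_succ (t - 1)
            rw [show t - 1 + 1 = t by omega] at this
            omega
          apply run_infix' x (S (t - 1)) (k (t - 1)) n (by omega)
          intro i hi1 hi2
          apply hfalse (t - 1) i hi1
          rw [show t - 1 + 1 = t by omega]
          omega
    -- lower bound eventually
    have hlow : ∀ᶠ n in atTop, ((c / 4) ^ 3 : ℝ) ≤ (kxSum (pref x n) : ℝ) / (n : ℝ) ^ 3 := by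
      obtain ⟨n2, hn2⟩ : ∃ n2 : ℕ, (2 : ℝ) / c ≤ n2 := exists_nat_ge _
      filter_upwards [hrun, eventually_ge_atTop (n2 + 1)] with n hm hn
      obtain ⟨m, hcm, hinf⟩ := hm
      have hnpos : 0 < n := by omega
      have hnR : (0 : ℝ) < n := by exact_mod_cast hnpos
      have hcn2 : (2 : ℝ) ≤ c * n := by
        have : (n2 : ℝ) ≤ n := by exact_mod_cast (by omega : n2 ≤ n)
        rw [div_le_iff₀ hcpos] at hn2
        nlinarith
      have hhalf : c * n / 4 ≤ ((m / 2 : ℕ) : ℝ) := by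
        have h1 : ((m / 2 : ℕ) : ℝ) ≥ ((m : ℝ) - 1) / 2 := by
          have hnat : m ≤ 2 * (m / 2) + 1 := by omega
          have h2 : (m : ℝ) ≤ 2 * ((m / 2 : ℕ) : ℝ) + 1 := by exact_mod_cast hnat
          linarith
        have h3 : (c * n - 1) / 2 ≤ ((m : ℝ) - 1) / 2 := by linarith
        have h4 : c * n / 4 ≤ (c * n - 1) / 2 := by linarith
        linarith
      have hkx : ((m / 2) ^ 3 : ℕ) ≤ kxSum (pref x n) := kxSum_ge' _ m hinf
      have hkxR : (c * n / 4) ^ 3 ≤ (kxSum (pref x n) : ℝ) := by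
        calc (c * n / 4) ^ 3 ≤ ((m / 2 : ℕ) : ℝ) ^ 3 := by
              apply pow_le_pow_left₀ (by positivity) hhalf
          _ = (((m / 2) ^ 3 : ℕ) : ℝ) := by push_cast; ring
          _ ≤ _ := by exact_mod_cast hkx
      rw [le_div_iff₀ (by positivity)]
      calc ((c / 4) ^ 3 : ℝ) * n ^ 3 = (c * n / 4) ^ 3 := by ring
        _ ≤ _ := hkxR
    -- upper bound eventually (for coboundedness)
    have hub : IsBoundedUnder (· ≤ ·) atTop (fun n => (kxSum (pref x n) : ℝ) / (n : ℝ) ^ 3) := by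
      refine ⟨4, ?_⟩
      simp only [eventually_map]
      filter_upwards [eventually_ge_atTop 1] with n hn
      have hlen : (pref x n).length = n := by simp [pref]
      have h1 : kxSum (pref x n) ≤ n * (n * (n + 1)) := by
        have := kxSum_le' (pref x n); rwa [hlen] at this
      have hnR : (0 : ℝ) < n := by exact_mod_cast hn
      rw [div_le_iff₀ (by positivity)]
      have h2 : (kxSum (pref x n) : ℝ) ≤ n * (n * (n + 1)) := by exact_mod_cast h1
      have h3 : (1 : ℝ) ≤ n := by exact_mod_cast hn
      nlinarith [h2, h3, sq_nonneg ((n : ℝ) - 1)]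
    have hcb : IsCoboundedUnder (· ≥ ·) atTop
        (fun n => (kxSum (pref x n) : ℝ) / (n : ℝ) ^ 3) := hub.isCoboundedUnder_ge
    have hfin := le_liminf_of_le hcb hlow
    have : (0 : ℝ) < (c / 4) ^ 3 := by positivity
    linarith
  · -- non-periodicity
    rintro ⟨Np, p, hp, hper⟩
    set t := N + (Np + p) with ht
    have hkt : p ≤ k t := by
      have h := hklin (Np + p)
      rw [← ht] at h
      omega
    have hNpt : Np ≤ S t := le_trans (by omega) (hS_le t)
    set m := S (t + 1) - 1 with hm
    have hm1 : x m = true := htrue t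
    have hmeq : m = S t + k t := by have := hS_succ t; omega
    have hm0 : x (m - p) = false := by
      apply hfalse t
      · omega
      · have := hS_succ t; omega
    have hper' := hper (m - p) (by omega)
    rw [show m - p + p = m by omega] at hper'
    rw [hm1, hm0] at hper'
    simp at hper'
end
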